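/- Let L > 0, ν > 0 and Ω = (0,1)×(0,1)×(0,L) ⊂ ℝ³. Let u₀ : ℝ³ → ℝ³ be continuously differentiable on a neighborhood of the closure of Ω with ∇·u₀ = 0 on Ω, with all first partial derivatives of u₀ bounded in absolute value by N on Ω, and with u₀³(x,y,L) ≥ 0 for all (x,y) ∈ [0,1]×[0,1]. Then there exist constants γ > 0, α₀ > 0 and δ > 0 such that: for every measurable function τ : Ω → ℝ with 0 ≤ τ(x) ≤ δ for a.e. x ∈ Ω, and every vector field u : ℝ³ → ℝ³ that is twice continuously differentiable on a neighborhood of the closure of Ω, vanishes on the inlet (z = 0) and the walls (x ∈ {0,1}, y ∈ {0,1}), and satisfies the inverse-estimate inequality ν²∫_Ω τ|Δu|² dV ≤ ν∫_Ω |∇u|² dV, one has: ν∫_Ω |∇u|² dV + ∫_Ω (u₀·∇u)·u dV + ∫_Ω (u·∇u₀)·u dV + γ∫_Ω |u|² dV − ν∫_Ω τ (Δu)·(u₀·∇u) dV + ∫_Ω τ |u₀·∇u|² dV + ∫_Ω τ ((u·∇u₀)·(u₀·∇u)) dV + γ∫_Ω τ u·(u₀·∇u) dV ≥ α₀·( ∫_Ω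 |u|² dV + ∫_Ω |∇u|² dV ) + (1/6)∫_Ω τ |u₀·∇u|² dV. -/

import Mathlib

open MeasureTheory

/-- Partial derivative in the `i`-th coordinate direction of a scalar field on `ℝ³`. -/
noncomputable def pd (i : Fin 3) (f : (Fin 3 → ℝ) → ℝ) (x : Fin 3 → ℝ) : ℝ :=
  fderiv ℝ f x (Pi.single i 1)


private lemma young_xy (K c d x y : ℝ) (hc : 0 < c) (hKcd : K^2 ≤ 4*c*d) :
    K*(x*y) ≤ c*x^2 + d*y^2 := by
  nlinarith [sq_nonneg (2*c*x - K*y), mul_le_mul_of_nonneg_right hKcd (sq_nonneg y), hc.le,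
    mul_pos hc hc]

private lemma abs_mul_le_half (a b : ℝ) : |a * b| ≤ (a^2 + b^2)/2 := by
  rw [abs_mul]
  nlinarith [sq_nonneg (|a| - |b|), sq_abs a, sq_abs b, abs_nonneg a, abs_nonneg b]

private lemma youngK (v p a K c d : ℝ) (hv : |v| ≤ K) (hc : 0 < c) (hKcd : K^2 ≤ 4*c*d) :
    -(c*p^2 + d*a^2) ≤ v * p * a := by
  have h3 : -|v * (p*a)| ≤ v * (p*a) := neg_abs_le _
  have h1 : |v * (p*a)| ≤ K * |p*a| := by
    rw [abs_mul]; exact mul_le_mul_of_nonneg_right hv (abs_nonneg _)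
  have h2 : K * |p*a| ≤ c*p^2 + d*a^2 := by
    rw [abs_mul]
    have := young_xy K c d |p| |a| hc hKcd
    simpa [sq_abs] using this
  nlinarith [h1, h2, h3]

private lemma young_n (a n b N : ℝ) (hn : |n| ≤ N) : -(N/2*(a^2+b^2)) ≤ a * n * b := by
  have hN : 0 ≤ N := (abs_nonneg n).trans hn
  have h1 : |n * (a*b)| ≤ N * |a*b| := by
    rw [abs_mul]; exact mul_le_mul_of_nonneg_right hn (abs_nonneg _)
  have h2 : |a*b| ≤ (a^2+b^2)/2 := abs_mul_le_half a b
  have h3 : -|n * (a*b)| ≤ n * (a*b) := neg_abs_le _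
  nlinarith [mul_le_mul_of_nonneg_left h2 hN]

private lemma csq_bound (a1 a2 a3 n1 n2 n3 N : ℝ) (h1 : |n1| ≤ N) (h2 : |n2| ≤ N)
    (h3 : |n3| ≤ N) : (a1*n1 + a2*n2 + a3*n3)^2 ≤ 3*N^2*(a1^2+a2^2+a3^2) := by
  have e1 : n1^2 ≤ N^2 := sq_le_sq' (abs_le.mp h1).1 (abs_le.mp h1).2
  have e2 : n2^2 ≤ N^2 := sq_le_sq' (abs_le.mp h2).1 (abs_le.mp h2).2
  have e3 : n3^2 ≤ N^2 := sq_le_sq' (abs_le.mp h3).1 (abs_le.mp h3).2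
  nlinarith [sq_nonneg (a1*n1 - a2*n2), sq_nonneg (a1*n1 - a3*n3), sq_nonneg (a2*n2 - a3*n3),
    mul_le_mul_of_nonneg_left e1 (sq_nonneg a1), mul_le_mul_of_nonneg_left e2 (sq_nonneg a2),
    mul_le_mul_of_nonneg_left e3 (sq_nonneg a3)]

private lemma inner_bound (ν γ N M w q c a : ℝ) (hc : c^2 ≤ 3*N^2*M) :
    -(ν^2/2*q^2) - 3*N^2*M - 3*γ^2*a^2 ≤ -(ν*(q*w)) + (5/6)*w^2 + c*w + γ*(a*w) := by
  nlinarith [sq_nonneg (ν*q - w), sq_nonneg (w + 2*c), sq_nonneg (w + 6*γ*a)]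

set_option maxHeartbeats 2000000 in
private lemma pointwise_key (ν γ N K δ d₀ t a0 a1 a2 v0 v1 v2 q0 q1 q2
    p00 p01 p02 p10 p11 p12 p20 p21 p22
    n00 n01 n02 n10 n11 n12 n20 n21 n22 : ℝ)
    (hν : 0 < ν)
    (hv0 : |v0| ≤ K) (hv1 : |v1| ≤ K) (hv2 : |v2| ≤ K)
    (hn00 : |n00| ≤ N) (hn01 : |n01| ≤ N) (hn02 : |n02| ≤ N)
    (hn10 : |n10| ≤ N) (hn11 : |n11| ≤ N) (hn12 : |n12| ≤ N)
    (hn20 : |n20| ≤ N) (hn21 : |n21| ≤ N) (hn22 : |n22| ≤ N)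
    (ht0 : 0 ≤ t) (htδ : t ≤ δ)
    (hd0 : K^2 ≤ 4*(ν/12)*d₀)
    (hγ : 3*d₀ + 3*N + 2 ≤ γ)
    (hδγ : δ*(9*N^2+3*γ^2) ≤ 1) :
    (3*ν/4)*(p00^2+p01^2+p02^2+p10^2+p11^2+p12^2+p20^2+p21^2+p22^2)
      + (a0^2+a1^2+a2^2)
      + (1/6)*(t*((v0*p00+v1*p10+v2*p20)^2+(v0*p01+v1*p11+v2*p21)^2+(v0*p02+v1*p12+v2*p22)^2))
      - (ν^2/2)*(t*(q0^2+q1^2+q2^2))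
    ≤ ν*(p00^2+p01^2+p02^2+p10^2+p11^2+p12^2+p20^2+p21^2+p22^2)
      + ((v0*p00+v1*p10+v2*p20)*a0 + (v0*p01+v1*p11+v2*p21)*a1 + (v0*p02+v1*p12+v2*p22)*a2)
      + ((a0*n00+a1*n10+a2*n20)*a0 + (a0*n01+a1*n11+a2*n21)*a1 + (a0*n02+a1*n12+a2*n22)*a2)
      + γ*(a0^2+a1^2+a2^2)
      - ν*(t*(q0*(v0*p00+v1*p10+v2*p20)+q1*(v0*p01+v1*p11+v2*p21)+q2*(v0*p02+v1*p12+v2*p22)))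
      + t*((v0*p00+v1*p10+v2*p20)^2+(v0*p01+v1*p11+v2*p21)^2+(v0*p02+v1*p12+v2*p22)^2)
      + t*((a0*n00+a1*n10+a2*n20)*(v0*p00+v1*p10+v2*p20)
          +(a0*n01+a1*n11+a2*n21)*(v0*p01+v1*p11+v2*p21)
          +(a0*n02+a1*n12+a2*n22)*(v0*p02+v1*p12+v2*p22))
      + γ*(t*(a0*(v0*p00+v1*p10+v2*p20)+a1*(v0*p01+v1*p11+v2*p21)+a2*(v0*p02+v1*p12+v2*p22))) := by
  have hcpos : 0 < ν/12 := by linarith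
  have hB00 := youngK v0 p00 a0 K (ν/12) d₀ hv0 hcpos hd0
  have hB10 := youngK v1 p10 a0 K (ν/12) d₀ hv1 hcpos hd0
  have hB20 := youngK v2 p20 a0 K (ν/12) d₀ hv2 hcpos hd0
  have hB01 := youngK v0 p01 a1 K (ν/12) d₀ hv0 hcpos hd0
  have hB11 := youngK v1 p11 a1 K (ν/12) d₀ hv1 hcpos hd0
  have hB21 := youngK v2 p21 a1 K (ν/12) d₀ hv2 hcpos hd0
  have hB02 := youngK v0 p02 a2 K (ν/12) d₀ hv0 hcpos hd0
  have hB12 := youngK v1 p12 a2 K (ν/12) d₀ hv1 hcpos hd0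
  have hB22 := youngK v2 p22 a2 K (ν/12) d₀ hv2 hcpos hd0
  have hC00 := young_n a0 n00 a0 N hn00
  have hC10 := young_n a1 n10 a0 N hn10
  have hC20 := young_n a2 n20 a0 N hn20
  have hC01 := young_n a0 n01 a1 N hn01
  have hC11 := young_n a1 n11 a1 N hn11
  have hC21 := young_n a2 n21 a1 N hn21
  have hC02 := young_n a0 n02 a2 N hn02
  have hC12 := young_n a1 n12 a2 N hn12
  have hC22 := young_n a2 n22 a2 N hn22
  have hc0 := csq_bound a0 a1 a2 n00 n10 n20 N hn00 hn10 hn20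
  have hc1 := csq_bound a0 a1 a2 n01 n11 n21 N hn01 hn11 hn21
  have hc2 := csq_bound a0 a1 a2 n02 n12 n22 N hn02 hn12 hn22
  have hI0 := inner_bound ν γ N (a0^2+a1^2+a2^2) (v0*p00+v1*p10+v2*p20) q0
    (a0*n00+a1*n10+a2*n20) a0 hc0
  have hI1 := inner_bound ν γ N (a0^2+a1^2+a2^2) (v0*p01+v1*p11+v2*p21) q1
    (a0*n01+a1*n11+a2*n21) a1 hc1
  have hI2 := inner_bound ν γ N (a0^2+a1^2+a2^2) (v0*p02+v1*p12+v2*p22) q2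
    (a0*n02+a1*n12+a2*n22) a2 hc2
  have hIt0 := mul_le_mul_of_nonneg_left hI0 ht0
  have hIt1 := mul_le_mul_of_nonneg_left hI1 ht0
  have hIt2 := mul_le_mul_of_nonneg_left hI2 ht0
  have hM0 : (0:ℝ) ≤ a0^2+a1^2+a2^2 := by positivity
  have hdN : t*(3*N^2*(a0^2+a1^2+a2^2)) ≤ δ*(3*N^2*(a0^2+a1^2+a2^2)) :=
    mul_le_mul_of_nonneg_right htδ (by positivity)
  have hdg0 : t*(3*γ^2*a0^2) ≤ δ*(3*γ^2*a0^2) := mul_le_mul_of_nonneg_right htδ (by positivity)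
  have hdg1 : t*(3*γ^2*a1^2) ≤ δ*(3*γ^2*a1^2) := mul_le_mul_of_nonneg_right htδ (by positivity)
  have hdg2 : t*(3*γ^2*a2^2) ≤ δ*(3*γ^2*a2^2) := mul_le_mul_of_nonneg_right htδ (by positivity)
  have hδM := mul_le_mul_of_nonneg_right hδγ hM0
  have hγM := mul_le_mul_of_nonneg_right hγ hM0
  have hνP : (0:ℝ) ≤ ν*(p00^2+p01^2+p02^2+p10^2+p11^2+p12^2+p20^2+p21^2+p22^2) :=
    mul_nonneg hν.le (by positivity)
  have hBsum : -(ν/12*(p00^2+p01^2+p02^2+p10^2+p11^2+p12^2+p20^2+p21^2+p22^2)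
      + 3*d₀*(a0^2+a1^2+a2^2))
      ≤ (v0*p00+v1*p10+v2*p20)*a0 + (v0*p01+v1*p11+v2*p21)*a1 + (v0*p02+v1*p12+v2*p22)*a2 := by
    linarith [hB00, hB10, hB20, hB01, hB11, hB21, hB02, hB12, hB22]
  have hCsum : -(3*N*(a0^2+a1^2+a2^2))
      ≤ (a0*n00+a1*n10+a2*n20)*a0 + (a0*n01+a1*n11+a2*n21)*a1 + (a0*n02+a1*n12+a2*n22)*a2 := by
    linarith [hC00, hC10, hC20, hC01, hC11, hC21, hC02, hC12, hC22]
  have hTsum : -(ν^2/2)*(t*(q0^2+q1^2+q2^2)) - (a0^2+a1^2+a2^2)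
      ≤ -(ν*(t*(q0*(v0*p00+v1*p10+v2*p20)+q1*(v0*p01+v1*p11+v2*p21)+q2*(v0*p02+v1*p12+v2*p22))))
        + (5/6)*(t*((v0*p00+v1*p10+v2*p20)^2+(v0*p01+v1*p11+v2*p21)^2+(v0*p02+v1*p12+v2*p22)^2))
        + t*((a0*n00+a1*n10+a2*n20)*(v0*p00+v1*p10+v2*p20)+(a0*n01+a1*n11+a2*n21)*(v0*p01+v1*p11+v2*p21)+(a0*n02+a1*n12+a2*n22)*(v0*p02+v1*p12+v2*p22))
        + γ*(t*(a0*(v0*p00+v1*p10+v2*p20)+a1*(v0*p01+v1*p11+v2*p21)+a2*(v0*p02+v1*p12+v2*p22))) := by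
    linarith [hIt0, hIt1, hIt2, hdN, hdg0, hdg1, hdg2, hδM]
  linarith [hBsum, hCsum, hTsum, hγM, hνP]


private lemma contOn_pd {f : (Fin 3 → ℝ) → ℝ} {U : Set (Fin 3 → ℝ)} (hU : IsOpen U)
    (hf : ContDiffOn ℝ 1 f U) (k : Fin 3) : ContinuousOn (pd k f) U :=
  (hf.continuousOn_fderiv_of_isOpen hU le_rfl).clm_apply continuousOn_const

private lemma contDiffOn_pd_one {f : (Fin 3 → ℝ) → ℝ} {U : Set (Fin 3 → ℝ)} (hU : IsOpen U)
    (hf : ContDiffOn ℝ 2 f U) (k : Fin 3) : ContDiffOn ℝ 1 (pd k f) U := by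
  have h1 : ContDiffOn ℝ 1 (fderiv ℝ f) U := hf.fderiv_of_isOpen hU (by norm_num)
  exact (ContinuousLinearMap.apply ℝ ℝ (Pi.single k (1:ℝ))).contDiff.comp_contDiffOn h1

private lemma integral_split8 {α : Type*} [MeasurableSpace α] {μ : Measure α}
    {f1 f2 f3 f4 f5 f6 f7 f8 : α → ℝ} (c1 c4 c5 c8 : ℝ)
    (h1 : Integrable f1 μ) (h2 : Integrable f2 μ) (h3 : Integrable f3 μ) (h4 : Integrable f4 μ)
    (h5 : Integrable f5 μ) (h6 : Integrable f6 μ) (h7 : Integrable f7 μ) (h8 : Integrable f8 μ) :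
    ∫ x, (c1 * f1 x + f2 x + f3 x + c4 * f4 x - c5 * f5 x + f6 x + f7 x + c8 * f8 x) ∂μ
      = c1 * (∫ x, f1 x ∂μ) + (∫ x, f2 x ∂μ) + (∫ x, f3 x ∂μ) + c4 * (∫ x, f4 x ∂μ)
        - c5 * (∫ x, f5 x ∂μ) + (∫ x, f6 x ∂μ) + (∫ x, f7 x ∂μ) + c8 * (∫ x, f8 x ∂μ) := by
  have i1 : Integrable (fun x => c1 * f1 x) μ := h1.const_mul c1
  have i4 : Integrable (fun x => c4 * f4 x) μ := h4.const_mul c4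
  have i5 : Integrable (fun x => c5 * f5 x) μ := h5.const_mul c5
  have i8 : Integrable (fun x => c8 * f8 x) μ := h8.const_mul c8
  have j2 : Integrable (fun x => c1 * f1 x + f2 x) μ := i1.add h2
  have j3 : Integrable (fun x => c1 * f1 x + f2 x + f3 x) μ := j2.add h3
  have j4 : Integrable (fun x => c1 * f1 x + f2 x + f3 x + c4 * f4 x) μ := j3.add i4
  have j5 : Integrable (fun x => c1 * f1 x + f2 x + f3 x + c4 * f4 x - c5 * f5 x) μ := j4.sub i5
  have j6 : Integrable (fun x => c1 * f1 x + f2 x + f3 x + c4 * f4 x - c5 * f5 x + f6 x) μ :=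
    j5.add h6
  have j7 : Integrable
      (fun x => c1 * f1 x + f2 x + f3 x + c4 * f4 x - c5 * f5 x + f6 x + f7 x) μ := j6.add h7
  rw [integral_add j7 i8, integral_add j6 h7, integral_add j5 h6, integral_sub j4 i5,
    integral_add j3 i4, integral_add j2 h3, integral_add i1 h2,
    integral_const_mul c1, integral_const_mul c4, integral_const_mul c5, integral_const_mul c8]

private lemma integral_split4 {α : Type*} [MeasurableSpace α] {μ : Measure α}
    {f1 f2 f3 f4 : α → ℝ} (c1 c3 c4 : ℝ)
    (h1 : Integrable f1 μ) (h2 : Integrable f2 μ) (h3 : Integrable f3 μ) (h4 : Integrable f4 μ) :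
    ∫ x, (c1 * f1 x + f2 x + c3 * f3 x - c4 * f4 x) ∂μ
      = c1 * (∫ x, f1 x ∂μ) + (∫ x, f2 x ∂μ) + c3 * (∫ x, f3 x ∂μ) - c4 * (∫ x, f4 x ∂μ) := by
  have i1 : Integrable (fun x => c1 * f1 x) μ := h1.const_mul c1
  have i3 : Integrable (fun x => c3 * f3 x) μ := h3.const_mul c3
  have i4 : Integrable (fun x => c4 * f4 x) μ := h4.const_mul c4
  have j2 : Integrable (fun x => c1 * f1 x + f2 x) μ := i1.add h2
  have j3 : Integrable (fun x => c1 * f1 x + f2 x + c3 * f3 x) μ := j2.add i3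
  rw [integral_sub j3 i4, integral_add j2 i3, integral_add i1 h2,
    integral_const_mul c1, integral_const_mul c3, integral_const_mul c4]

private lemma final_combine (ν γ α IA IB IC IM ID IS IE IF IQ FF GG : ℝ)
    (hL : FF = ν*IA + IB + IC + γ*IM - ν*ID + IS + IE + γ*IF)
    (hG : GG = 3*ν/4*IA + IM + 1/6*IS - ν^2/2*IQ)
    (hm : GG ≤ FF) (hinv : ν^2*IQ ≤ ν*IA)
    (h1 : α*IM ≤ IM) (h2 : α*IA ≤ ν/4*IA) :
    α*(IM + IA) + 1/6*IS ≤ ν*IA + IB + IC + γ*IM - ν*ID + IS + IE + γ*IF := by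
  linarith

set_option maxHeartbeats 4000000 in
/-- Lemma 2 of the paper: coercivity of the SUPG-stabilized bilinear form.
For a divergence-free `C¹` base flow `u₀` with first derivatives bounded by `N` and
outflow at the outlet, there exist `γ, α₀, δ > 0` such that for every measurable
stabilization parameter `τ` with `0 ≤ τ ≤ δ` a.e. on `Ω` and every `C²` field `u`
vanishing on the inlet and the walls which satisfies the inverse estimate
`ν²∫τ|Δu|² ≤ ν∫|∇u|²`, the SUPG form is bounded below by
`α₀(∫|u|² + ∫|∇u|²) + (1/6)∫τ|u₀·∇u|²`. -/
theorem coercivity_SUPG (L ν N : ℝ) (hL : 0 < L) (hν : 0 < ν)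
    (Ω : Set (Fin 3 → ℝ))
    (hΩ : Ω = {x : Fin 3 → ℝ | x 0 ∈ Set.Ioo (0 : ℝ) 1 ∧ x 1 ∈ Set.Ioo (0 : ℝ) 1 ∧
      x 2 ∈ Set.Ioo (0 : ℝ) L})
    (u₀ : (Fin 3 → ℝ) → (Fin 3 → ℝ))
    (hu₀ : ∃ U : Set (Fin 3 → ℝ), IsOpen U ∧ closure Ω ⊆ U ∧ ContDiffOn ℝ 1 u₀ U)
    (hdiv : ∀ x ∈ Ω, ∑ k : Fin 3, pd k (fun y => u₀ y k) x = 0)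
    (hbound : ∀ x ∈ Ω, ∀ k i : Fin 3, |pd k (fun y => u₀ y i) x| ≤ N)
    (houtflow : ∀ q : ℝ × ℝ, q.1 ∈ Set.Icc (0 : ℝ) 1 → q.2 ∈ Set.Icc (0 : ℝ) 1 →
      0 ≤ u₀ ![q.1, q.2, L] 2) :
    ∃ γ > (0 : ℝ), ∃ α₀ > (0 : ℝ), ∃ δ > (0 : ℝ),
      ∀ τ : (Fin 3 → ℝ) → ℝ, Measurable τ →
        (∀ᵐ x ∂(volume.restrict Ω), 0 ≤ τ x ∧ τ x ≤ δ) →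
        ∀ u : (Fin 3 → ℝ) → (Fin 3 → ℝ),
          (∃ U : Set (Fin 3 → ℝ), IsOpen U ∧ closure Ω ⊆ U ∧ ContDiffOn ℝ 2 u U) →
          (∀ x ∈ closure Ω,
            (x 2 = 0 ∨ x 0 = 0 ∨ x 0 = 1 ∨ x 1 = 0 ∨ x 1 = 1) → u x = 0) →
          (ν ^ 2 * (∫ x in Ω, τ x * ∑ i : Fin 3,
              (∑ k : Fin 3, pd k (pd k (fun y => u y i)) x) ^ 2)
            ≤ ν * ∫ x in Ω, ∑ k : Fin 3, ∑ i : Fin 3, (pd k (fun y => u y i) x) ^ 2) →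
          ν * (∫ x in Ω, ∑ k : Fin 3, ∑ i : Fin 3, (pd k (fun y => u y i) x) ^ 2)
            + (∫ x in Ω, ∑ i : Fin 3,
                (∑ k : Fin 3, u₀ x k * pd k (fun y => u y i) x) * u x i)
            + (∫ x in Ω, ∑ i : Fin 3,
                (∑ k : Fin 3, u x k * pd k (fun y => u₀ y i) x) * u x i)
            + γ * (∫ x in Ω, ∑ i : Fin 3, (u x i) ^ 2)
            - ν * (∫ x in Ω, τ x * ∑ i : Fin 3,
                (∑ k : Fin 3, pd k (pd k (fun y => u y i)) x) *
                  (∑ k : Fin 3, u₀ x k * pd k (fun y => u y i) x))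
            + (∫ x in Ω, τ x * ∑ i : Fin 3,
                (∑ k : Fin 3, u₀ x k * pd k (fun y => u y i) x) ^ 2)
            + (∫ x in Ω, τ x * ∑ i : Fin 3,
                (∑ k : Fin 3, u x k * pd k (fun y => u₀ y i) x) *
                  (∑ k : Fin 3, u₀ x k * pd k (fun y => u y i) x))
            + γ * (∫ x in Ω, τ x * ∑ i : Fin 3,
                u x i * (∑ k : Fin 3, u₀ x k * pd k (fun y => u y i) x))
          ≥ α₀ * ((∫ x in Ω, ∑ i : Fin 3, (u x i) ^ 2)
              + (∫ x in Ω, ∑ k : Fin 3, ∑ i : Fin 3, (pd k (fun y => u y i) x) ^ 2))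
            + (1 / 6) * (∫ x in Ω, τ x * ∑ i : Fin 3,
                (∑ k : Fin 3, u₀ x k * pd k (fun y => u y i) x) ^ 2) := by
  obtain ⟨U₀, hU₀o, hU₀s, hu₀c⟩ := hu₀
  have hΩm : MeasurableSet Ω := by
    rw [hΩ]
    exact ((measurable_pi_apply 0) measurableSet_Ioo).inter
      (((measurable_pi_apply 1) measurableSet_Ioo).inter
        ((measurable_pi_apply 2) measurableSet_Ioo))
  have hsubIcc : Ω ⊆ Set.Icc (fun _ => (0:ℝ)) (fun _ => max 1 L) := by
    rw [hΩ]; rintro x ⟨h0, h1, h2⟩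
    constructor
    · intro j; fin_cases j
      · exact h0.1.le
      · exact h1.1.le
      · exact h2.1.le
    · intro j; fin_cases j
      · exact h0.2.le.trans (le_max_left 1 L)
      · exact h1.2.le.trans (le_max_left 1 L)
      · exact h2.2.le.trans (le_max_right 1 L)
  have hclIcc : closure Ω ⊆ Set.Icc (fun _ => (0:ℝ)) (fun _ => max 1 L) :=
    closure_minimal hsubIcc isClosed_Icc
  have hcomp : IsCompact (closure Ω) :=
    IsCompact.of_isClosed_subset isCompact_Icc isClosed_closure hclIcc
  have hvol : volume Ω < ⊤ :=
    lt_of_le_of_lt (measure_mono hsubIcc) isCompact_Icc.measure_lt_top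
  have hsub : Ω ⊆ closure Ω := subset_closure
  have hptΩ : (![1/2, 1/2, L/2] : Fin 3 → ℝ) ∈ Ω := by
    rw [hΩ]
    refine ⟨?_, ?_, ?_⟩
    · show (1:ℝ)/2 ∈ Set.Ioo (0:ℝ) 1
      constructor <;> norm_num
    · show (1:ℝ)/2 ∈ Set.Ioo (0:ℝ) 1
      constructor <;> norm_num
    · show L/2 ∈ Set.Ioo (0:ℝ) L
      constructor <;> linarith
  have hN0 : 0 ≤ N := le_trans (abs_nonneg _) (hbound _ hptΩ 0 0)
  obtain ⟨K, hK⟩ := hcomp.exists_bound_of_continuousOn (hu₀c.continuousOn.mono hU₀s)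
  have hvK : ∀ x ∈ Ω, ∀ k : Fin 3, |u₀ x k| ≤ K := by
    intro x hx k
    have h1 : ‖u₀ x k‖ ≤ ‖u₀ x‖ := norm_le_pi_norm (u₀ x) k
    have h2 := hK x (hsub hx)
    rw [Real.norm_eq_abs] at h1
    exact h1.trans h2
  have hn_c : ∀ k i : Fin 3, ContinuousOn (fun x => pd k (fun y => u₀ y i) x) (closure Ω) := by
    intro k i
    have h0 : ContDiffOn ℝ 1 (fun y => u₀ y i) U₀ :=
      (ContinuousLinearMap.proj (R := ℝ) (φ := fun _ : Fin 3 => ℝ) i).contDiff.comp_contDiffOn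
        hu₀c
    exact (contOn_pd hU₀o h0 k).mono hU₀s
  have hd0 : K^2 ≤ 4*(ν/12)*(3*K^2/ν) := by
    have h : 4*(ν/12)*(3*K^2/ν) = K^2 := by field_simp; ring
    linarith
  set γ := 3*(3*K^2/ν) + 3*N + 2 with hγdef
  have hγ0 : 0 < γ := by
    have h9 : 0 ≤ 3*(3*K^2/ν) := by positivity
    rw [hγdef]; linarith
  set δ := (9*N^2 + 3*γ^2 + 1)⁻¹ with hδdef
  have hD : (0:ℝ) < 9*N^2 + 3*γ^2 + 1 := by positivity
  have hδ0 : 0 < δ := by rw [hδdef]; positivity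
  have hδγ : δ*(9*N^2+3*γ^2) ≤ 1 := by
    have h1 : δ*(9*N^2+3*γ^2) ≤ δ*(9*N^2+3*γ^2+1) := by nlinarith [hδ0.le]
    have h2 : δ*(9*N^2+3*γ^2+1) = 1 := by rw [hδdef]; exact inv_mul_cancel₀ hD.ne'
    linarith
  have hα0 : 0 < min (ν/4) 1 := lt_min (by linarith) one_pos
  refine ⟨γ, hγ0, min (ν/4) 1, hα0, δ, hδ0, ?_⟩
  intro τ hτm hτae u hu _hbc hinv
  obtain ⟨U, hUo, hUs, hC2⟩ := hu
  have hui : ∀ i : Fin 3, ContDiffOn ℝ 2 (fun y => u y i) U := fun i =>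
    (ContinuousLinearMap.proj (R := ℝ) (φ := fun _ : Fin 3 => ℝ) i).contDiff.comp_contDiffOn hC2
  have hu_c : ∀ i : Fin 3, ContinuousOn (fun x => u x i) (closure Ω) := fun i =>
    ((hui i).continuousOn).mono hUs
  have hv_c : ∀ k : Fin 3, ContinuousOn (fun x => u₀ x k) (closure Ω) := fun k =>
    (((ContinuousLinearMap.proj (R := ℝ) (φ := fun _ : Fin 3 => ℝ) k).contDiff.comp_contDiffOn
      hu₀c).continuousOn).mono hU₀s
  have hp_c : ∀ k i : Fin 3, ContinuousOn (fun x => pd k (fun y => u y i) x) (closure Ω) :=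
    fun k i => (contOn_pd hUo ((hui i).of_le one_le_two) k).mono hUs
  have hq_c : ∀ k i : Fin 3, ContinuousOn (fun x => pd k (pd k (fun y => u y i)) x)
      (closure Ω) :=
    fun k i => (contOn_pd hUo (contDiffOn_pd_one hUo (hui i) k) k).mono hUs
  have haeΩ : ∀ᵐ x ∂(volume.restrict Ω), x ∈ Ω := ae_restrict_mem hΩm
  have hIntC : ∀ h : (Fin 3 → ℝ) → ℝ, ContinuousOn h (closure Ω) →
      Integrable h (volume.restrict Ω) := by
    intro h hc
    obtain ⟨C, hC⟩ := hcomp.exists_bound_of_continuousOn hc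
    refine Integrable.mono' (g := fun _ => C) (integrableOn_const hvol.ne)
      ((hc.mono hsub).aestronglyMeasurable hΩm) ?_
    filter_upwards [haeΩ] with x hx using hC x (hsub hx)
  have hIntτ : ∀ h : (Fin 3 → ℝ) → ℝ, ContinuousOn h (closure Ω) →
      Integrable (fun x => τ x * h x) (volume.restrict Ω) := by
    intro h hc
    obtain ⟨C, hC⟩ := hcomp.exists_bound_of_continuousOn hc
    refine Integrable.mono' (g := fun _ => δ * C) (integrableOn_const hvol.ne)
      ((hτm.aestronglyMeasurable.restrict).mul ((hc.mono hsub).aestronglyMeasurable hΩm)) ?_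
    filter_upwards [haeΩ, hτae] with x hx ht
    have h1 : ‖h x‖ ≤ C := hC x (hsub hx)
    calc ‖τ x * h x‖ = ‖τ x‖ * ‖h x‖ := norm_mul _ _
      _ ≤ δ * C := by
          refine mul_le_mul ?_ h1 (norm_nonneg _) hδ0.le
          rw [Real.norm_eq_abs, abs_of_nonneg ht.1]; exact ht.2
  have cw : ∀ i : Fin 3, ContinuousOn
      (fun x => ∑ k : Fin 3, u₀ x k * pd k (fun y => u y i) x) (closure Ω) :=
    fun i => continuousOn_finset_sum _ fun k _ => (hv_c k).mul (hp_c k i)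
  have cc : ∀ i : Fin 3, ContinuousOn
      (fun x => ∑ k : Fin 3, u x k * pd k (fun y => u₀ y i) x) (closure Ω) :=
    fun i => continuousOn_finset_sum _ fun k _ => (hu_c k).mul (hn_c k i)
  have cq : ∀ i : Fin 3, ContinuousOn
      (fun x => ∑ k : Fin 3, pd k (pd k (fun y => u y i)) x) (closure Ω) :=
    fun i => continuousOn_finset_sum _ fun k _ => hq_c k i
  have iA : Integrable (fun x => ∑ k : Fin 3, ∑ i : Fin 3, (pd k (fun y => u y i) x) ^ 2) (volume.restrict Ω) := hIntC _
    (continuousOn_finset_sum _ fun k _ => continuousOn_finset_sum _ fun i _ => (hp_c k i).pow 2)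
  have iB : Integrable (fun x => ∑ i : Fin 3, (∑ k : Fin 3, u₀ x k * pd k (fun y => u y i) x) * u x i) (volume.restrict Ω) := hIntC _
    (continuousOn_finset_sum _ fun i _ => (cw i).mul (hu_c i))
  have iC : Integrable (fun x => ∑ i : Fin 3, (∑ k : Fin 3, u x k * pd k (fun y => u₀ y i) x) * u x i) (volume.restrict Ω) := hIntC _
    (continuousOn_finset_sum _ fun i _ => (cc i).mul (hu_c i))
  have iM : Integrable (fun x => ∑ i : Fin 3, (u x i) ^ 2) (volume.restrict Ω) := hIntC _
    (continuousOn_finset_sum _ fun i _ => (hu_c i).pow 2)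
  have iD : Integrable (fun x => τ x * ∑ i : Fin 3, (∑ k : Fin 3, pd k (pd k (fun y => u y i)) x) * (∑ k : Fin 3, u₀ x k * pd k (fun y => u y i) x)) (volume.restrict Ω) := hIntτ _
    (continuousOn_finset_sum _ fun i _ => (cq i).mul (cw i))
  have iS : Integrable (fun x => τ x * ∑ i : Fin 3, (∑ k : Fin 3, u₀ x k * pd k (fun y => u y i) x) ^ 2) (volume.restrict Ω) := hIntτ _
    (continuousOn_finset_sum _ fun i _ => (cw i).pow 2)
  have iE : Integrable (fun x => τ x * ∑ i : Fin 3, (∑ k : Fin 3, u x k * pd k (fun y => u₀ y i) x) * (∑ k : Fin 3, u₀ x k * pd k (fun y => u y i) x)) (volume.restrict Ω) := hIntτ _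
    (continuousOn_finset_sum _ fun i _ => (cc i).mul (cw i))
  have iF : Integrable (fun x => τ x * ∑ i : Fin 3, u x i * (∑ k : Fin 3, u₀ x k * pd k (fun y => u y i) x)) (volume.restrict Ω) := hIntτ _
    (continuousOn_finset_sum _ fun i _ => (hu_c i).mul (cw i))
  have iQ : Integrable (fun x => τ x * ∑ i : Fin 3, (∑ k : Fin 3, pd k (pd k (fun y => u y i)) x) ^ 2) (volume.restrict Ω) := hIntτ _
    (continuousOn_finset_sum _ fun i _ => (cq i).pow 2)
  have iFint : Integrable (fun x => ν * (∑ k : Fin 3, ∑ i : Fin 3, (pd k (fun y => u y i) x) ^ 2) + (∑ i : Fin 3, (∑ k : Fin 3, u₀ x k * pd k (fun y => u y i) x) * u x i) + (∑ i : Fin 3, (∑ k : Fin 3, u x k * pd k (fun y => u₀ y i) x) * u x i) + γ * (∑ i : Fin 3, (u x i) ^ 2) - ν * (τ x * ∑ i : Fin 3, (∑ k : Fin 3, pd k (pd k (fun y => u y i)) x) * (∑ k : Fin 3, u₀ x k * pd k (fun y => u y i) x)) + (τ x * ∑ i : Fin 3, (∑ k : Fin 3, u₀ x k * pd k (fun y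 => u y i) x) ^ 2) + (τ x * ∑ i : Fin 3, (∑ k : Fin 3, u x k * pd k (fun y => u₀ y i) x) * (∑ k : Fin 3, u₀ x k * pd k (fun y => u y i) x)) + γ * (τ x * ∑ i : Fin 3, u x i * (∑ k : Fin 3, u₀ x k * pd k (fun y => u y i) x))) (volume.restrict Ω) :=
    (((((((iA.const_mul ν).add iB).add iC).add (iM.const_mul γ)).sub
      (iD.const_mul ν)).add iS).add iE).add (iF.const_mul γ)
  have iGint : Integrable (fun x => 3*ν/4 * (∑ k : Fin 3, ∑ i : Fin 3, (pd k (fun y => u y i) x) ^ 2) + (∑ i : Fin 3, (u x i) ^ 2) + 1/6 * (τ x * ∑ i : Fin 3, (∑ k : Fin 3, u₀ x k * pd k (fun y => u y i) x) ^ 2) - ν^2/2 * (τ x * ∑ i : Fin 3, (∑ k : Fin 3, pd k (pd k (fun y => u y i)) x) ^ 2)) (volume.restrict Ω) :=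
    (((iA.const_mul (3*ν/4)).add iM).add (iS.const_mul (1/6))).sub (iQ.const_mul (ν^2/2))
  have hLsplit : (∫ x in Ω, (ν * (∑ k : Fin 3, ∑ i : Fin 3, (pd k (fun y => u y i) x) ^ 2) + (∑ i : Fin 3, (∑ k : Fin 3, u₀ x k * pd k (fun y => u y i) x) * u x i) + (∑ i : Fin 3, (∑ k : Fin 3, u x k * pd k (fun y => u₀ y i) x) * u x i) + γ * (∑ i : Fin 3, (u x i) ^ 2) - ν * (τ x * ∑ i : Fin 3, (∑ k : Fin 3, pd k (pd k (fun y => u y i)) x) * (∑ k : Fin 3, u₀ x k * pd k (fun y => u y i) x)) + (τ x * ∑ i : Fin 3, (∑ k : Fin 3, u₀ x k * pd k (fun y => u y i) x) ^ 2) + (τ x * ∑ i : Fin 3, (∑ k : Fin 3, u x k * pd k (fun y => u₀ y i) x) * (∑ k : Fin 3, u₀ x k * pd k (fun y => u y i) x)) + γ * (τ x * ∑ i : Fin 3, u x i * (∑ k : Fin 3, u₀ x k * pd k (fun y => u y i) x))))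
      = ν * (∫ x in Ω, ∑ k : Fin 3, ∑ i : Fin 3, (pd k (fun y => u y i) x) ^ 2) + (∫ x in Ω, ∑ i : Fin 3, (∑ k : Fin 3, u₀ x k * pd k (fun y => u y i) x) * u x i) + (∫ x in Ω, ∑ i : Fin 3, (∑ k : Fin 3, u x k * pd k (fun y => u₀ y i) x) * u x i) + γ * (∫ x in Ω, ∑ i : Fin 3, (u x i) ^ 2)
        - ν * (∫ x in Ω, τ x * ∑ i : Fin 3, (∑ k : Fin 3, pd k (pd k (fun y => u y i)) x) * (∑ k : Fin 3, u₀ x k * pd k (fun y => u y i) x)) + (∫ x in Ω, τ x * ∑ i : Fin 3, (∑ k : Fin 3, u₀ x k * pd k (fun y => u y i) x) ^ 2) + (∫ x in Ω, τ x * ∑ i : Fin 3, (∑ k : Fin 3, u x k * pd k (fun y => u₀ y i) x) * (∑ k : Fin 3, u₀ x k * pd k (fun y => u y i) x)) + γ * (∫ x in Ω, τ x * ∑ i : Fin 3, u x i * (∑ k : Fin 3, u₀ x k * pd k (fun y => u y i) x)) :=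
    integral_split8 ν γ ν γ iA iB iC iM iD iS iE iF
  have hGsplit : (∫ x in Ω, (3*ν/4 * (∑ k : Fin 3, ∑ i : Fin 3, (pd k (fun y => u y i) x) ^ 2) + (∑ i : Fin 3, (u x i) ^ 2) + 1/6 * (τ x * ∑ i : Fin 3, (∑ k : Fin 3, u₀ x k * pd k (fun y => u y i) x) ^ 2) - ν^2/2 * (τ x * ∑ i : Fin 3, (∑ k : Fin 3, pd k (pd k (fun y => u y i)) x) ^ 2)))
      = 3*ν/4 * (∫ x in Ω, ∑ k : Fin 3, ∑ i : Fin 3, (pd k (fun y => u y i) x) ^ 2) + (∫ x in Ω, ∑ i : Fin 3, (u x i) ^ 2) + 1/6 * (∫ x in Ω, τ x * ∑ i : Fin 3, (∑ k : Fin 3, u₀ x k * pd k (fun y => u y i) x) ^ 2)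
        - ν^2/2 * (∫ x in Ω, τ x * ∑ i : Fin 3, (∑ k : Fin 3, pd k (pd k (fun y => u y i)) x) ^ 2) :=
    integral_split4 (3*ν/4) (1/6) (ν^2/2) iA iM iS iQ
  have hpt : (fun x => 3*ν/4 * (∑ k : Fin 3, ∑ i : Fin 3, (pd k (fun y => u y i) x) ^ 2) + (∑ i : Fin 3, (u x i) ^ 2) + 1/6 * (τ x * ∑ i : Fin 3, (∑ k : Fin 3, u₀ x k * pd k (fun y => u y i) x) ^ 2) - ν^2/2 * (τ x * ∑ i : Fin 3, (∑ k : Fin 3, pd k (pd k (fun y => u y i)) x) ^ 2)) ≤ᵐ[volume.restrict Ω] (fun x => ν * (∑ k : Fin 3, ∑ i : Fin 3, (pd k (fun y => u y i) x) ^ 2) + (∑ i : Fin 3, (∑ k : Fin 3, u₀ x k * pd k (fun y => u y i) x) * u x i) + (∑ i : Fin 3, (∑ k : Fin 3, u x k * pd k (fun y => u₀ y i) x) * u x i) + γ * (∑ i : Fin 3, (u x i) ^ 2) - ν * (τ x * ∑ i : Fin 3, (∑ k : Fin 3, pd k (pd k (fun y => u y i)) x) * (∑ k : Fin 3, u₀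 x k * pd k (fun y => u y i) x)) + (τ x * ∑ i : Fin 3, (∑ k : Fin 3, u₀ x k * pd k (fun y => u y i) x) ^ 2) + (τ x * ∑ i : Fin 3, (∑ k : Fin 3, u x k * pd k (fun y => u₀ y i) x) * (∑ k : Fin 3, u₀ x k * pd k (fun y => u y i) x)) + γ * (τ x * ∑ i : Fin 3, u x i * (∑ k : Fin 3, u₀ x k * pd k (fun y => u y i) x))) := by
    filter_upwards [haeΩ, hτae] with x hx ht
    have key := pointwise_key ν γ N K δ (3*K^2/ν) (τ x) (u x 0) (u x 1) (u x 2)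
      (u₀ x 0) (u₀ x 1) (u₀ x 2)
      (∑ k : Fin 3, pd k (pd k (fun y => u y 0)) x)
      (∑ k : Fin 3, pd k (pd k (fun y => u y 1)) x)
      (∑ k : Fin 3, pd k (pd k (fun y => u y 2)) x)
      (pd 0 (fun y => u y 0) x) (pd 0 (fun y => u y 1) x) (pd 0 (fun y => u y 2) x)
      (pd 1 (fun y => u y 0) x) (pd 1 (fun y => u y 1) x) (pd 1 (fun y => u y 2) x)
      (pd 2 (fun y => u y 0) x) (pd 2 (fun y => u y 1) x) (pd 2 (fun y => u y 2) x)
      (pd 0 (fun y => u₀ y 0) x) (pd 0 (fun y => u₀ y 1) x) (pd 0 (fun y => u₀ y 2) x)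
      (pd 1 (fun y => u₀ y 0) x) (pd 1 (fun y => u₀ y 1) x) (pd 1 (fun y => u₀ y 2) x)
      (pd 2 (fun y => u₀ y 0) x) (pd 2 (fun y => u₀ y 1) x) (pd 2 (fun y => u₀ y 2) x)
      hν (hvK x hx 0) (hvK x hx 1) (hvK x hx 2)
      (hbound x hx 0 0) (hbound x hx 0 1) (hbound x hx 0 2)
      (hbound x hx 1 0) (hbound x hx 1 1) (hbound x hx 1 2)
      (hbound x hx 2 0) (hbound x hx 2 1) (hbound x hx 2 2)
      ht.1 ht.2 hd0 hγdef.ge hδγ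
    simp only [Fin.sum_univ_three] at key ⊢
    linarith [key]
  have hmono := integral_mono_ae iGint iFint hpt
  have hIA0 : 0 ≤ ∫ x in Ω, ∑ k : Fin 3, ∑ i : Fin 3, (pd k (fun y => u y i) x) ^ 2 := setIntegral_nonneg hΩm (fun x _ => by positivity)
  have hIM0 : 0 ≤ ∫ x in Ω, ∑ i : Fin 3, (u x i) ^ 2 := setIntegral_nonneg hΩm (fun x _ => by positivity)
  have hα1 : min (ν/4) 1 * (∫ x in Ω, ∑ i : Fin 3, (u x i) ^ 2) ≤ (∫ x in Ω, ∑ i : Fin 3, (u x i) ^ 2) :=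
    mul_le_of_le_one_left hIM0 (min_le_right _ _)
  have hα2 : min (ν/4) 1 * (∫ x in Ω, ∑ k : Fin 3, ∑ i : Fin 3, (pd k (fun y => u y i) x) ^ 2) ≤ ν/4 * (∫ x in Ω, ∑ k : Fin 3, ∑ i : Fin 3, (pd k (fun y => u y i) x) ^ 2) :=
    mul_le_mul_of_nonneg_right (min_le_left _ _) hIA0
  rw [ge_iff_le]
  exact final_combine ν γ (min (ν/4) 1) _ _ _ _ _ _ _ _ _ _ _ hLsplit hGsplit hmono hinv hα1 hα2
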